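/- For every connected graph G with at least one edge, the Ramsey number satisfies R(G) ≥ (χ(G) − 1)(|G| − 1) + σ(G), where σ(G) is the minimum size of a colour class over all proper χ(G)-colourings of G. -/

import Mathlib

/-- The minimum size of a colour class over all proper colourings of `G` with `k` colours. -/
noncomputable def minColourClass {V : Type} [Fintype V] (G : SimpleGraph V) (k : ℕ) : ℕ :=
  sInf {m | ∃ C : G.Coloring (Fin k), ∃ i : Fin k,
    m = (Finset.univ.filter fun v => C v = i).card}

/-- For every connected graph `G` with at least one edge,
`R(G) ≥ (χ(G) − 1)(|G| − 1) + σ(G)`: any `N` such that every 2-colouring of `K_N`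
contains a monochromatic copy of `G` satisfies `N ≥ (χ(G) − 1)(|G| − 1) + σ(G)`. -/
theorem stmt_1 {V : Type} [Fintype V] (G : SimpleGraph V)
    (hconn : G.Connected) (hedge : G.edgeSet.Nonempty)
    (k : ℕ) (hk : G.chromaticNumber = k)
    (N : ℕ)
    (hN : ∀ c : Fin N → Fin N → Bool, (∀ u v, c u v = c v u) →
      ∃ b : Bool, ∃ f : V → Fin N, Function.Injective f ∧
        ∀ u v, G.Adj u v → c (f u) (f v) = b) :
    (k - 1) * (Fintype.card V - 1) + minColourClass G k ≤ N := by
  classical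
  -- basic facts
  obtain ⟨e, he⟩ := hedge
  induction e using Sym2.ind with | _ x y => ?_
  rw [SimpleGraph.mem_edgeSet] at he
  have hxy : x ≠ y := G.ne_of_adj he
  set n := Fintype.card V with hn
  have hn2 : 2 ≤ n := Fintype.one_lt_card_iff_nontrivial.mpr ⟨⟨x, y, hxy⟩⟩
  have hcol : G.Colorable k := by
    rw [← SimpleGraph.chromaticNumber_le_iff_colorable, hk]
  obtain ⟨C₀⟩ := hcol
  have hk2 : 2 ≤ k := by
    rcases Nat.lt_or_ge k 2 with h | h
    · exfalso
      interval_cases k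
      · exact (C₀ x).elim0
      · exact C₀.valid he (Subsingleton.elim _ _)
    · exact h
  set σ := minColourClass G k with hσ
  -- every colour class of every k-colouring has size ≥ σ
  have hclass : ∀ (C : G.Coloring (Fin k)) (i : Fin k),
      σ ≤ (Finset.univ.filter fun v => C v = i).card := by
    intro C i
    exact Nat.sInf_le ⟨C, i, rfl⟩
  -- σ ≥ 1: no colour class is empty
  have hσ1 : 1 ≤ σ := by
    rw [Nat.one_le_iff_ne_zero]
    intro h0
    have hmem : (0 : ℕ) ∈ {m | ∃ C : G.Coloring (Fin k), ∃ i : Fin k,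
        m = (Finset.univ.filter fun v => C v = i).card} := by
      rw [← h0]
      exact Nat.sInf_mem ⟨_, C₀, ⟨0, by omega⟩, rfl⟩
    obtain ⟨C, i, hi⟩ := hmem
    have hne : ∀ v, C v ≠ i := by
      intro v hv
      have hv' : v ∈ Finset.univ.filter fun v => C v = i := by simp [hv]
      have := Finset.card_pos.mpr ⟨v, hv'⟩
      omega
    obtain ⟨k', rfl⟩ : ∃ k', k = k' + 1 := ⟨k - 1, by omega⟩
    have hD : ∀ v, ∃ z : Fin k', i.succAbove z = C v := fun v =>
      Fin.exists_succAbove_eq (hne v)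
    set D : V → Fin k' := fun v => (hD v).choose with hDdef
    have hDs : ∀ v, i.succAbove (D v) = C v := fun v => (hD v).choose_spec
    have : G.Colorable k' := by
      refine ⟨SimpleGraph.Coloring.mk D ?_⟩
      intro u v huv hEq
      apply C.valid huv
      rw [← hDs u, ← hDs v, hEq]
    have := this.chromaticNumber_le
    rw [hk] at this
    have := Nat.cast_le.mp this
    omega
  -- σ ≤ n - 1
  have hσn : σ ≤ n - 1 := by
    have hsum : ∑ i : Fin k, (Finset.univ.filter fun v => C₀ v = i).card = n := by
      rw [← Finset.card_eq_sum_card_fiberwise (fun v _ => Finset.mem_univ (C₀ v))]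
      rfl
    have hks : k * σ ≤ n := by
      rw [← hsum]
      calc k * σ = ∑ _i : Fin k, σ := by simp [mul_comm]
      _ ≤ _ := Finset.sum_le_sum fun i _ => hclass C₀ i
    have h2σ : 2 * σ ≤ k * σ := Nat.mul_le_mul_right σ hk2
    have : 2 * σ ≤ n := le_trans h2σ hks
    omega
  set m := n - 1 with hm
  have hm1 : 1 ≤ m := by omega
  -- main argument by contradiction
  by_contra hlt
  push_neg at hlt
  have hNle : N + 1 ≤ (k - 1) * m + σ := hlt
  obtain ⟨P, hP⟩ : ∃ P, P = (k - 1) * m := ⟨_, rfl⟩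
  rw [← hP] at hNle
  have hkm : P + m = k * m := by
    have h5 : k - 1 + 1 = k := by omega
    calc P + m = ((k - 1) + 1) * m := by rw [hP]; ring
    _ = k * m := by rw [h5]
  -- the colouring of K_N
  set c : Fin N → Fin N → Bool := fun u v => decide ((u : ℕ) / m = (v : ℕ) / m) with hc
  obtain ⟨b, f, hfinj, hfc⟩ := hN c (by intro u v; simp [hc, eq_comm])
  cases b with
  | true =>
    -- red case: all vertices in one block of size ≤ m
    have hgadj : ∀ u v, G.Adj u v → (f u : ℕ) / m = (f v : ℕ) / m := by
      intro u v huv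
      have := hfc u v huv
      simpa [hc] using this
    have hgwalk : ∀ u v, G.Walk u v → (f u : ℕ) / m = (f v : ℕ) / m := by
      intro u v p
      induction p with
      | nil => rfl
      | cons h p ih => exact (hgadj _ _ h).trans ih
    set q := (f x : ℕ) / m with hq
    have hgall : ∀ v, (f v : ℕ) / m = q := fun v =>
      ((hconn v x).elim fun p => hgwalk _ _ p)
    obtain ⟨Q, hb⟩ : ∃ Q, ∀ v, Q ≤ (f v : ℕ) ∧ (f v : ℕ) < Q + m := by
      refine ⟨m * q, fun v => ?_⟩
      have h1 := Nat.div_add_mod (f v : ℕ) m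
      have h2 : (f v : ℕ) % m < m := Nat.mod_lt _ (by omega)
      rw [hgall v] at h1
      constructor
      · calc m * q ≤ m * q + (f v : ℕ) % m := Nat.le_add_right _ _
        _ = (f v : ℕ) := h1
      · calc (f v : ℕ) = m * q + (f v : ℕ) % m := h1.symm
        _ < m * q + m := Nat.add_lt_add_left h2 _
    have : n ≤ m := by
      have := Fintype.card_le_of_injective
        (fun v => (⟨(f v : ℕ) - Q, by have := hb v; omega⟩ : Fin m))
        (by
          intro u v huv
          have hu := hb u
          have hv := hb v
          have h6 : (f u : ℕ) - Q = (f v : ℕ) - Q := congrArg Fin.val huv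
          have : (f u : ℕ) = (f v : ℕ) := by omega
          exact hfinj (Fin.val_injective this))
      simpa using this
    omega
  | false =>
    -- blue case: build a proper k-colouring of G
    have hflt : ∀ v, (f v : ℕ) / m < k := by
      intro v
      have h1 : (f v : ℕ) < N := (f v).isLt
      rw [Nat.div_lt_iff_lt_mul (by omega : 0 < m), ← hkm]
      omega
    have hadj : ∀ u v, G.Adj u v → (f u : ℕ) / m ≠ (f v : ℕ) / m := by
      intro u v huv
      have := hfc u v huv
      simpa [hc] using this
    set C : G.Coloring (Fin k) := SimpleGraph.Coloring.mk
      (fun v => ⟨(f v : ℕ) / m, hflt v⟩)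
      (by
        intro u v huv hEq
        exact hadj u v huv (congrArg Fin.val hEq)) with hC
    set i : Fin k := ⟨k - 1, by omega⟩ with hi
    have hsmall : (Finset.univ.filter fun v => C v = i).card ≤ N - P := by
      have := Finset.card_le_card_of_injOn (fun v => (f v : ℕ))
        (s := Finset.univ.filter fun v => C v = i)
        (t := Finset.Ico P N)
        (by
          intro v hv
          rw [Finset.mem_coe, Finset.mem_filter] at hv
          have hv2 : (f v : ℕ) / m = k - 1 := congrArg Fin.val hv.2
          rw [Finset.mem_coe, Finset.mem_Ico]
          refine ⟨?_, (f v).isLt⟩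
          calc P = (k - 1) * m := hP
          _ = (f v : ℕ) / m * m := by rw [hv2]
          _ ≤ (f v : ℕ) := Nat.div_mul_le_self _ _)
        (by
          intro u _ v _ huv
          exact hfinj (Fin.val_injective huv))
      simpa using this
    have := hclass C i
    omega
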